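/- For every n ≥ 1, every bounded subset of ℝⁿ equipped with the ℓ∞ (supremum) norm distance d(x,y) = max_{1≤i≤n} |x_i − y_i| admits an isometric embedding into the Gromov–Hausdorff space M. -/
import Mathlib

open GromovHausdorff Metric Set

def SpC (n : ℕ) (_a : Fin n → ℝ) : Type := Fin n × Bool

instance (n : ℕ) (a : Fin n → ℝ) : Finite (SpC n a) := by unfold SpC; infer_instance

def spd (n : ℕ) (a : Fin n → ℝ) (D : ℝ) (p q : Fin n × Bool) : ℝ :=
  if p.1 = q.1 then (if p.2 = q.2 then 0 else a p.1) else D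

theorem spd_self (n : ℕ) (a : Fin n → ℝ) (D : ℝ) (p : Fin n × Bool) : spd n a D p p = 0 := by
  simp [spd]

theorem spd_comm (n : ℕ) (a : Fin n → ℝ) (D : ℝ) (p q : Fin n × Bool) :
    spd n a D p q = spd n a D q p := by
  obtain ⟨pi, pu⟩ := p; obtain ⟨qi, qu⟩ := q
  unfold spd
  by_cases h : pi = qi
  · subst h
    by_cases h' : pu = qu
    · subst h'; simp
    · rw [if_neg h', if_neg (fun e : qu = pu => h' e.symm)]
  · rw [if_neg h, if_neg (fun e : qi = pi => h e.symm)]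

theorem spd_triangle (n : ℕ) (a : Fin n → ℝ) (D : ℝ)
    (h1 : ∀ i, 0 < a i) (h2 : ∀ i, a i ≤ D) (h3 : 0 < D) (p q r : Fin n × Bool) :
    spd n a D p r ≤ spd n a D p q + spd n a D q r := by
  obtain ⟨pi, pu⟩ := p; obtain ⟨qi, qu⟩ := q; obtain ⟨ri, ru⟩ := r
  unfold spd
  have hap := h1 pi; have haq := h1 qi
  have h2p := h2 pi; have h2q := h2 qi
  dsimp only
  split_ifs <;> first
      | linarith
      | simp_all
      | (subst_vars; first | linarith | simp_all | (exfalso; omega))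

theorem spd_eq_zero (n : ℕ) (a : Fin n → ℝ) (D : ℝ)
    (h1 : ∀ i, 0 < a i) (h3 : 0 < D) (p q : Fin n × Bool) (h : spd n a D p q = 0) : p = q := by
  unfold spd at h
  split_ifs at h with e1 e2
  · exact Prod.ext e1 e2
  · exact absurd h (ne_of_gt (h1 p.1))
  · exact absurd h (ne_of_gt h3)

noncomputable def spMet (n : ℕ) (a : Fin n → ℝ) (D : ℝ)
    (h1 : ∀ i, 0 < a i) (h2 : ∀ i, a i ≤ D) (h3 : 0 < D) : MetricSpace (SpC n a) :=
  { dist := spd n a D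
    dist_self := spd_self n a D
    dist_comm := spd_comm n a D
    dist_triangle := spd_triangle n a D h1 h2 h3
    eq_of_dist_eq_zero := fun {p q} h => spd_eq_zero n a D h1 h3 p q h }

noncomputable def ghp (n : ℕ) (hn : 0 < n) (a : Fin n → ℝ) (D : ℝ)
    (h1 : ∀ i, 0 < a i) (h2 : ∀ i, a i ≤ D) (h3 : 0 < D) : GHSpace :=
  letI : MetricSpace (SpC n a) := spMet n a D h1 h2 h3
  haveI : Nonempty (Fin n) := Fin.pos_iff_nonempty.mp hn
  haveI : Nonempty (SpC n a) := by unfold SpC; infer_instance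
  haveI : CompactSpace (SpC n a) := Finite.compactSpace
  toGHSpace (SpC n a)

theorem ghp_dist_le (n : ℕ) (hn : 0 < n) (a b : Fin n → ℝ) (D : ℝ)
    (h1a : ∀ i, 0 < a i) (h2a : ∀ i, a i ≤ D) (h3 : 0 < D)
    (h1b : ∀ i, 0 < b i) (h2b : ∀ i, b i ≤ D)
    (r : ℝ) (hr0 : 0 ≤ r) (hab : ∀ i, |a i - b i| ≤ 2 * r) :
    dist (ghp n hn a D h1a h2a h3) (ghp n hn b D h1b h2b h3) ≤ r := by
  letI MX : MetricSpace (SpC n a) := spMet n a D h1a h2a h3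
  letI MY : MetricSpace (SpC n b) := spMet n b D h1b h2b h3
  haveI : Nonempty (Fin n) := Fin.pos_iff_nonempty.mp hn
  haveI : Nonempty (SpC n a) := by unfold SpC; infer_instance
  haveI : Nonempty (SpC n b) := by unfold SpC; infer_instance
  haveI : CompactSpace (SpC n a) := Finite.compactSpace
  haveI : CompactSpace (SpC n b) := Finite.compactSpace
  have hgh : dist (ghp n hn a D h1a h2a h3) (ghp n hn b D h1b h2b h3)
      = ghDist (SpC n a) (SpC n b) := rfl
  rw [hgh]
  have H := ghDist_le_of_approx_subsets (X := SpC n a) (Y := SpC n b)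
    (s := (univ : Set (SpC n a))) (fun p => (show SpC n b from (p : SpC n a)))
    (ε₁ := 0) (ε₂ := 2 * r) (ε₃ := 0)
    (fun x => ⟨x, mem_univ x, by rw [dist_self]⟩)
    (fun q => ⟨⟨(show SpC n a from q), mem_univ _⟩, by rw [dist_self]⟩)
    (fun p q => by
      have e1 : dist p q = spd n a D p.1 q.1 := rfl
      have e2 : dist (show SpC n b from (p : SpC n a)) (show SpC n b from (q : SpC n a))
          = spd n b D p.1 q.1 := rfl
      rw [e1, e2]
      unfold spd
      split_ifs with w1 w2
      · simp; linarith
      · exact hab _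
      · simp; linarith)
  linarith
theorem abs_le_two_ghp_dist (n : ℕ) (hn : 0 < n) (a b : Fin n → ℝ) (D : ℝ)
    (h1a : ∀ i, 0 < a i) (h2a : ∀ i, a i ≤ D) (h3 : 0 < D)
    (h1b : ∀ i, 0 < b i) (h2b : ∀ i, b i ≤ D)
    (hc0 : ∀ i, |a i - b i| ≤ a i)
    (hcj : ∀ i j, i ≠ j → |a i - b i| ≤ |a i - b j|)
    (hcD : ∀ i, |a i - b i| ≤ D - a i)
    (i : Fin n) :
    |a i - b i| ≤ 2 * dist (ghp n hn a D h1a h2a h3) (ghp n hn b D h1b h2b h3) := by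
  letI MX : MetricSpace (SpC n a) := spMet n a D h1a h2a h3
  letI MY : MetricSpace (SpC n b) := spMet n b D h1b h2b h3
  haveI : Nonempty (Fin n) := Fin.pos_iff_nonempty.mp hn
  haveI : Nonempty (SpC n a) := by unfold SpC; infer_instance
  haveI : Nonempty (SpC n b) := by unfold SpC; infer_instance
  haveI : CompactSpace (SpC n a) := Finite.compactSpace
  haveI : CompactSpace (SpC n b) := Finite.compactSpace
  have hgh : dist (ghp n hn a D h1a h2a h3) (ghp n hn b D h1b h2b h3)
      = ghDist (SpC n a) (SpC n b) := rfl
  rw [hgh]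
  set h := ghDist (SpC n a) (SpC n b) with hh
  obtain ⟨Φ, Ψ, hΦ, hΨ, heq⟩ := ghDist_eq_hausdorffDist (SpC n a) (SpC n b)
  have hcmp : IsCompact (range Ψ) := isCompact_range hΨ.continuous
  have hfin : EMetric.hausdorffEdist (range Φ) (range Ψ) ≠ ⊤ :=
    hausdorffEdist_ne_top_of_nonempty_of_bounded (range_nonempty _) (range_nonempty _)
      (isCompact_range hΦ.continuous).isBounded hcmp.isBounded
  -- approximation map
  have near : ∀ p : SpC n a, ∃ q : SpC n b, dist (Φ p) (Ψ q) ≤ h := by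
    intro p
    have h1 : infDist (Φ p) (range Ψ) ≤ hausdorffDist (range Φ) (range Ψ) :=
      infDist_le_hausdorffDist_of_mem (mem_range_self p) hfin
    obtain ⟨yq, hyq, hdq⟩ := hcmp.exists_infDist_eq_dist (range_nonempty _) (Φ p)
    obtain ⟨q, rfl⟩ := hyq
    exact ⟨q, by rw [← hdq]; rw [← heq] at h1; exact h1⟩
  set p : SpC n a := ((i, true) : Fin n × Bool) with hp
  set p' : SpC n a := ((i, false) : Fin n × Bool) with hp'
  obtain ⟨q, hq⟩ := near p
  obtain ⟨q', hq'⟩ := near p'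
  have hdpp : dist p p' = a i := by
    show spd n a D (i, true) (i, false) = a i
    simp [spd]
  have hqq : dist q q' = spd n b D q q' := rfl
  -- two-sided bound on dist q q'
  have tb1 : dist (Ψ q) (Ψ q') ≤ dist (Ψ q) (Φ p) + dist (Φ p) (Φ p') + dist (Φ p') (Ψ q') :=
    dist_triangle4 _ _ _ _
  have tb2 : dist (Φ p) (Φ p') ≤ dist (Φ p) (Ψ q) + dist (Ψ q) (Ψ q') + dist (Ψ q') (Φ p') :=
    dist_triangle4 _ _ _ _
  have e1 : dist (Ψ q) (Ψ q') = dist q q' := hΨ.dist_eq q q'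
  have e2 : dist (Φ p) (Φ p') = dist p p' := hΦ.dist_eq p p'
  have c1 : dist (Ψ q) (Φ p) = dist (Φ p) (Ψ q) := dist_comm _ _
  have c2 : dist (Ψ q') (Φ p') = dist (Φ p') (Ψ q') := dist_comm _ _
  have key : |dist q q' - a i| ≤ 2 * h := by
    rw [abs_le]; constructor <;> [skip; skip] <;> rw [hdpp] at * <;> linarith
  -- case analysis on dist q q'
  obtain ⟨qi, qu⟩ := q
  obtain ⟨qi', qu'⟩ := q'
  rw [hqq] at key
  unfold spd at key
  dsimp only at key
  have habs := abs_le.mp key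
  by_cases w1 : qi = qi'
  · rw [if_pos w1] at key habs
    by_cases w2 : qu = qu'
    · rw [if_pos w2] at habs
      have : a i ≤ 2 * h := by
        have := abs_le.mp (hc0 i); cases habs; linarith
      have := abs_le.mp (hc0 i)
      have h0 : (0:ℝ) ≤ |a i - b i| := abs_nonneg _
      linarith [hc0 i]
    · rw [if_neg w2] at habs
      by_cases w3 : qi = i
      · subst w3
        rw [abs_le]
        constructor <;> cases habs <;> linarith
      · have := abs_le.mp (hcj i qi (Ne.symm w3))
        have hle : |a i - b qi| ≤ 2 * h := by
          rw [abs_sub_comm]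
          rw [abs_le]
          constructor <;> linarith [habs.1, habs.2]
        linarith [hcj i qi (Ne.symm w3)]
  · rw [if_neg w1] at habs
    have h4 : |a i - b i| ≤ D - a i := hcD i
    have h5 : (0:ℝ) ≤ |a i - b i| := abs_nonneg _
    linarith [habs.1, habs.2]

/-- For every `n ≥ 1`, every bounded subset of `ℝⁿ` with the `ℓ^∞`
(supremum) distance (the canonical product metric on `Fin n → ℝ`, where
`dist x y = max_i |x i - y i|`) admits an isometric embedding into the
Gromov–Hausdorff space. -/
theorem bounded_subset_linfty_Rn_embeds (n : ℕ) (hn : 1 ≤ n)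
    (s : Set (Fin n → ℝ)) (hs : Bornology.IsBounded s) :
    ∃ f : s → GHSpace, Isometry f := by
  classical
  have hn0 : 0 < n := hn
  obtain ⟨r, hr⟩ := hs.subset_closedBall (0 : Fin n → ℝ)
  set B : ℝ := max r 0 with hBdef
  have hB0 : 0 ≤ B := le_max_right _ _
  have hB : ∀ z ∈ s, ∀ i, |z i| ≤ B := by
    intro z hz i
    have h1 : dist z 0 ≤ r := mem_closedBall.mp (hr hz)
    have h2 : dist (z i) ((0 : Fin n → ℝ) i) ≤ dist z 0 := dist_le_pi_dist z 0 i
    have : |z i| = dist (z i) 0 := by rw [Real.dist_eq, sub_zero]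
    rw [this]
    calc dist (z i) 0 ≤ dist z 0 := h2
      _ ≤ r := h1
      _ ≤ B := le_max_left _ _
  set C : ℝ := 10 * B + 10 with hCdef
  set DD : ℝ := 2 * ((n : ℝ) + 2) * C with hDdef
  set aa : (Fin n → ℝ) → Fin n → ℝ := fun z i => 2 * ((i : ℝ) + 1) * C + 2 * z i with haa
  have hC0 : 0 < C := by positivity
  have hin : ∀ i : Fin n, (i : ℝ) + 1 ≤ (n : ℝ) := by
    intro i; exact_mod_cast i.isLt
  have hi0 : ∀ i : Fin n, (0:ℝ) ≤ (i : ℝ) := fun i => Nat.cast_nonneg _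
  have h1 : ∀ z ∈ s, ∀ i, 0 < aa z i := by
    intro z hz i
    have := abs_le.mp (hB z hz i)
    have := hi0 i
    simp only [haa]
    nlinarith
  have h2 : ∀ z ∈ s, ∀ i, aa z i ≤ DD := by
    intro z hz i
    have := abs_le.mp (hB z hz i)
    have h3 := hin i
    have := hi0 i
    simp only [haa, hDdef]
    nlinarith
  have h3 : 0 < DD := by
    have : (1:ℝ) ≤ (n:ℝ) := by exact_mod_cast hn
    simp only [hDdef]; nlinarith
  -- the embedding
  refine ⟨fun z => ghp n hn0 (aa z.1) DD (h1 z.1 z.2) (h2 z.1 z.2) h3, ?_⟩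
  apply Isometry.of_dist_eq
  intro x y
  have hax := fun i => abs_le.mp (hB x.1 x.2 i)
  have hay := fun i => abs_le.mp (hB y.1 y.2 i)
  have ediff : ∀ i, aa x.1 i - aa y.1 i = 2 * (x.1 i - y.1 i) := by
    intro i; simp only [haa]; ring
  have habs : ∀ i, |aa x.1 i - aa y.1 i| ≤ 4 * B := by
    intro i
    rw [ediff i, abs_le]
    have := hax i; have := hay i
    constructor <;> linarith [(hax i).1, (hax i).2, (hay i).1, (hay i).2]
  apply le_antisymm
  · apply ghp_dist_le
    · exact dist_nonneg
    · intro i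
      rw [ediff i]
      have hd : |x.1 i - y.1 i| ≤ dist x y := by
        rw [← Real.dist_eq]
        calc dist (x.1 i) (y.1 i) ≤ dist x.1 y.1 := dist_le_pi_dist _ _ i
          _ = dist x y := (Subtype.dist_eq x y).symm
      rw [abs_mul]
      simp only [abs_two]
      have := abs_nonneg (x.1 i - y.1 i)
      linarith
  · -- lower bound
    have key : ∀ i, |aa x.1 i - aa y.1 i|
        ≤ 2 * dist (ghp n hn0 (aa x.1) DD (h1 x.1 x.2) (h2 x.1 x.2) h3)
            (ghp n hn0 (aa y.1) DD (h1 y.1 y.2) (h2 y.1 y.2) h3) := by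
      apply abs_le_two_ghp_dist
      · -- hc0
        intro i
        have := h1 x.1 x.2 i
        have hb := habs i
        have hlow : 18 * B + 20 ≤ aa x.1 i := by
          have := (hax i).1
          have := hi0 i
          simp only [haa, hCdef]
          nlinarith
        linarith
      · -- hcj
        intro i j hij
        have hvij : (i : ℝ) ≠ (j : ℝ) := by
          simp only [ne_eq, Nat.cast_inj]
          exact fun e => hij (Fin.ext e)
        have hgap : (1:ℝ) ≤ |(i:ℝ) - (j:ℝ)| := by
          have : i.val ≠ j.val := fun e => hij (Fin.ext e)
          rcases lt_or_gt_of_ne this with h | h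
          · rw [abs_sub_comm, le_abs]
            left
            have : (i:ℝ) + 1 ≤ (j:ℝ) := by exact_mod_cast h
            linarith
          · rw [le_abs]; left
            have : (j:ℝ) + 1 ≤ (i:ℝ) := by exact_mod_cast h
            linarith
        have hE : aa x.1 i - aa y.1 j = 2 * ((i:ℝ) - (j:ℝ)) * C + 2 * (x.1 i - y.1 j) := by
          simp only [haa]; ring
        have hb := habs i
        have hx1 := (hax i).1; have hx2 := (hax i).2
        have hy1 := (hay j).1; have hy2 := (hay j).2
        rcases le_abs.mp hgap with hg | hg
        · -- i - j ≥ 1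
          have : 2 * C - 4 * B ≤ aa x.1 i - aa y.1 j := by rw [hE]; nlinarith
          have h2' : aa x.1 i - aa y.1 j ≤ |aa x.1 i - aa y.1 j| := le_abs_self _
          simp only [hCdef] at this
          linarith
        · -- j - i ≥ 1
          have : 2 * C - 4 * B ≤ -(aa x.1 i - aa y.1 j) := by rw [hE]; nlinarith
          have h2' : -(aa x.1 i - aa y.1 j) ≤ |aa x.1 i - aa y.1 j| := neg_le_abs _
          simp only [hCdef] at this
          linarith
      · -- hcD
        intro i
        have hb := habs i
        have hup : aa x.1 i ≤ 2 * (n:ℝ) * C + 2 * B := by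
          have := hin i; have := (hax i).2
          simp only [haa]
          nlinarith
        have : 4 * C - 2 * B ≤ DD - aa x.1 i := by
          simp only [hDdef]; nlinarith
        simp only [hCdef] at this
        linarith
    rw [Subtype.dist_eq]
    have hd0 : 0 ≤ dist (ghp n hn0 (aa x.1) DD (h1 x.1 x.2) (h2 x.1 x.2) h3)
        (ghp n hn0 (aa y.1) DD (h1 y.1 y.2) (h2 y.1 y.2) h3) := dist_nonneg
    rw [dist_pi_le_iff hd0]
    intro i
    have hk := key i
    rw [ediff i, abs_mul, abs_two] at hk
    rw [Real.dist_eq]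
    linarith
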